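/- Let g : ℝ → ℝ be three times differentiable and convex (g''(t) ≥ 0 for all t), and let S > 0 satisfy |g'''(t)| ≤ S·g''(t) for all t ∈ ℝ. Then for all t ≥ 0, (g''(0)/S²)·φ(S·t) ≤ g(t) − g(0) − g'(0)·t ≤ (g''(0)/S²)·φ(−S·t). -/

import Mathlib

open Real

private lemma key_nonneg {f f' : ℝ → ℝ} (hf : ∀ s, HasDerivAt f (f' s) s)
    (h0 : f 0 = 0) (hd : ∀ s, 0 ≤ s → 0 ≤ f' s) {t : ℝ} (ht : 0 ≤ t) : 0 ≤ f t := by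
  have hm : MonotoneOn f (Set.Ici 0) :=
    monotoneOn_of_deriv_nonneg (convex_Ici 0)
      (fun s _ => (hf s).continuousAt.continuousWithinAt)
      (fun s _ => (hf s).differentiableAt.differentiableWithinAt)
      (fun s hs => by
        rw [(hf s).deriv]
        exact hd s (le_of_lt (by simpa [interior_Ici] using hs)))
  have := hm Set.self_mem_Ici (by exact ht) ht
  linarith [h0 ▸ this]

/-- Bach's self-concordance-type lemma (Lemma 1 of Bach):
lower and upper Taylor-like expansions with `φ(u) = e^{-u} + u - 1`. -/
theorem self_concordant_taylor_bounds
    (g : ℝ → ℝ) (S : ℝ) (hS : 0 < S)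
    (hg1 : Differentiable ℝ g)
    (hg2 : Differentiable ℝ (deriv g))
    (hg3 : Differentiable ℝ (deriv (deriv g)))
    (hconv : ∀ t, 0 ≤ deriv (deriv g) t)
    (hsc : ∀ t, |deriv (deriv (deriv g)) t| ≤ S * deriv (deriv g) t)
    (t : ℝ) (ht : 0 ≤ t) :
    (deriv (deriv g) 0 / S ^ 2) * (Real.exp (-(S * t)) + S * t - 1)
        ≤ g t - g 0 - deriv g 0 * t ∧
      g t - g 0 - deriv g 0 * t
        ≤ (deriv (deriv g) 0 / S ^ 2) * (Real.exp (S * t) - S * t - 1) := by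
  have hS' : S ≠ 0 := ne_of_gt hS
  -- notation
  set h : ℝ → ℝ := deriv (deriv g) with hh
  set a : ℝ := h 0 with ha
  have hderg : ∀ s, HasDerivAt g (deriv g s) s := fun s => (hg1 s).hasDerivAt
  have hderg' : ∀ s, HasDerivAt (deriv g) (h s) s := fun s => (hg2 s).hasDerivAt
  have hderh : ∀ s, HasDerivAt h (deriv (deriv (deriv g)) s) s := fun s => (hg3 s).hasDerivAt
  have hexp : ∀ (c : ℝ) (s : ℝ), HasDerivAt (fun x => Real.exp (c * x)) (Real.exp (c * s) * c) s := by
    intro c s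
    simpa using ((hasDerivAt_id s).const_mul c).exp
  -- Step 1: a * exp(-(S*s)) ≤ h s for s ≥ 0
  have step1 : ∀ s, 0 ≤ s → a * Real.exp (-(S * s)) ≤ h s := by
    intro s hs
    have H : ∀ u, HasDerivAt (fun x => h x * Real.exp (S * x) - a)
        ((deriv (deriv (deriv g)) u + S * h u) * Real.exp (S * u)) u := by
      intro u
      have := ((hderh u).mul (hexp S u)).sub_const a
      refine this.congr_deriv ?_
      ring
    have hkey : 0 ≤ h s * Real.exp (S * s) - a := by
      refine key_nonneg H (by simp [ha]) (fun u hu => ?_) hs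
      have := abs_le.mp (hsc u)
      have := (Real.exp_pos (S * u)).le
      nlinarith
    rw [Real.exp_neg, mul_inv_le_iff₀ (Real.exp_pos _)]
    linarith
  -- Step 2: h s ≤ a * exp(S*s) for s ≥ 0
  have step2 : ∀ s, 0 ≤ s → h s ≤ a * Real.exp (S * s) := by
    intro s hs
    have H : ∀ u, HasDerivAt (fun x => a - h x * Real.exp (-(S * x)))
        ((S * h u - deriv (deriv (deriv g)) u) * Real.exp (-(S * u))) u := by
      intro u
      have h1 : HasDerivAt (fun x => Real.exp (-S * x)) (Real.exp (-S * u) * (-S)) u := hexp (-S) u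
      have h2 : HasDerivAt (fun x => Real.exp (-(S * x))) (Real.exp (-(S * u)) * (-S)) u := by
        simpa [neg_mul] using h1
      have := ((hderh u).mul h2).const_sub a
      refine this.congr_deriv ?_
      ring
    have hkey : 0 ≤ a - h s * Real.exp (-(S * s)) := by
      refine key_nonneg H (by simp [ha]) (fun u hu => ?_) hs
      have := abs_le.mp (hsc u)
      have := (Real.exp_pos (-(S * u))).le
      nlinarith
    have h3 : h s * Real.exp (-(S * s)) ≤ a := by linarith
    rw [Real.exp_neg, mul_inv_le_iff₀ (Real.exp_pos _)] at h3
    exact h3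
  -- derivative of the exponential pieces
  have h2' : ∀ u : ℝ, HasDerivAt (fun x => Real.exp (-(S * x))) (Real.exp (-(S * u)) * (-S)) u := by
    intro u
    simpa [neg_mul] using hexp (-S) u
  -- Step 3: lower bound for deriv g
  have step3 : ∀ s, 0 ≤ s →
      0 ≤ (deriv g s - deriv g 0) - (a / S) * (1 - Real.exp (-(S * s))) := by
    intro s hs
    have H : ∀ u, HasDerivAt
        (fun x => (deriv g x - deriv g 0) - (a / S) * (1 - Real.exp (-(S * x))))
        (h u - a * Real.exp (-(S * u))) u := by
      intro u
      have hinner : HasDerivAt (fun x => (1 : ℝ) - Real.exp (-(S * x)))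
          (-(Real.exp (-(S * u)) * (-S))) u := (h2' u).const_sub 1
      have := ((hderg' u).sub_const (deriv g 0)).sub (hinner.const_mul (a / S))
      refine this.congr_deriv ?_
      field_simp
    refine key_nonneg H (by simp) (fun u hu => ?_) hs
    linarith [step1 u hu]
  -- Step 4: upper bound for deriv g
  have step4 : ∀ s, 0 ≤ s →
      0 ≤ (a / S) * (Real.exp (S * s) - 1) - (deriv g s - deriv g 0) := by
    intro s hs
    have H : ∀ u, HasDerivAt
        (fun x => (a / S) * (Real.exp (S * x) - 1) - (deriv g x - deriv g 0))
        (a * Real.exp (S * u) - h u) u := by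
      intro u
      have hinner : HasDerivAt (fun x => Real.exp (S * x) - 1)
          (Real.exp (S * u) * S) u := (hexp S u).sub_const 1
      have := (hinner.const_mul (a / S)).sub ((hderg' u).sub_const (deriv g 0))
      refine this.congr_deriv ?_
      field_simp
    refine key_nonneg H (by simp) (fun u hu => ?_) hs
    linarith [step2 u hu]
  -- Step 5: lower bound for g
  have step5 : 0 ≤ (g t - g 0 - deriv g 0 * t)
      - (a / S ^ 2) * (Real.exp (-(S * t)) + S * t - 1) := by
    have H : ∀ u, HasDerivAt
        (fun x => (g x - g 0 - deriv g 0 * x)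
          - (a / S ^ 2) * (Real.exp (-(S * x)) + S * x - 1))
        ((deriv g u - deriv g 0) - (a / S) * (1 - Real.exp (-(S * u)))) u := by
      intro u
      have h1 : HasDerivAt (fun x => g x - g 0 - deriv g 0 * x)
          (deriv g u - deriv g 0) u := by
        exact (((hderg u).sub_const (g 0)).sub ((hasDerivAt_id u).const_mul (deriv g 0))).congr_deriv (by simp)
      have h2 : HasDerivAt (fun x => Real.exp (-(S * x)) + S * x - 1)
          (Real.exp (-(S * u)) * (-S) + S) u := by
        simpa using ((h2' u).add ((hasDerivAt_id u).const_mul S)).sub_const 1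
      have := h1.sub (h2.const_mul (a / S ^ 2))
      refine this.congr_deriv ?_
      field_simp
      ring
    exact key_nonneg H (by simp) (fun u hu => step3 u hu) ht
  -- Step 6: upper bound for g
  have step6 : 0 ≤ (a / S ^ 2) * (Real.exp (S * t) - S * t - 1)
      - (g t - g 0 - deriv g 0 * t) := by
    have H : ∀ u, HasDerivAt
        (fun x => (a / S ^ 2) * (Real.exp (S * x) - S * x - 1)
          - (g x - g 0 - deriv g 0 * x))
        ((a / S) * (Real.exp (S * u) - 1) - (deriv g u - deriv g 0)) u := by
      intro u
      have h1 : HasDerivAt (fun x => g x - g 0 - deriv g 0 * x)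
          (deriv g u - deriv g 0) u := by
        exact (((hderg u).sub_const (g 0)).sub ((hasDerivAt_id u).const_mul (deriv g 0))).congr_deriv (by simp)
      have h2 : HasDerivAt (fun x => Real.exp (S * x) - S * x - 1)
          (Real.exp (S * u) * S - S) u := by
        simpa using ((hexp S u).sub ((hasDerivAt_id u).const_mul S)).sub_const 1
      have := (h2.const_mul (a / S ^ 2)).sub h1
      refine this.congr_deriv ?_
      field_simp
    exact key_nonneg H (by simp) (fun u hu => step4 u hu) ht
  constructor <;> linarith
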